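/- Let n ≥ 3, let q be a prime, let a ∈ (ℤ/qℤ)^n with a ∉ 𝓛(n,q), and let ℓ ∈ (ℤ/qℤ)^n be a vector whose support has size s with s < n/(2(log n)²). Then there are at least s·n/(2(log n)²) pairs 1 ≤ i < j ≤ n for which ℓ_i·a_j + ℓ_j·a_i ≠ 0 in ℤ/qℤ. -/

import Mathlib

/-- `a ∈ 𝓛(n,q)`: some level set of `a` has size at least `n - n/(log n)²`. -/
def inL (n q : ℕ) (a : Fin n → ZMod q) : Prop :=
  ∃ r : ZMod q,
    (n : ℝ) - n / (Real.log n) ^ 2 ≤ (Finset.univ.filter (fun i => a i = r)).card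

/-- If `a ∉ 𝓛(n,q)` and `ℓ` has support of size `s < n/(2 (log n)²)`, then there
are at least `s·n/(2 (log n)²)` pairs `i < j` with `ℓ_i a_j + ℓ_j a_i ≠ 0` in `ℤ/qℤ`. -/
theorem small_support_pairs (n q : ℕ) (hn : 3 ≤ n) (hq : q.Prime)
    (a ℓ : Fin n → ZMod q) (ha : ¬ inL n q a)
    (hs : ((Finset.univ.filter (fun i => ℓ i ≠ 0)).card : ℝ)
        < n / (2 * (Real.log n) ^ 2)) :
    (((Finset.univ.filter (fun i => ℓ i ≠ 0)).card : ℝ) * n) / (2 * (Real.log n) ^ 2)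
      ≤ (Finset.univ.filter (fun p : Fin n × Fin n =>
          p.1 < p.2 ∧ ℓ p.1 * a p.2 + ℓ p.2 * a p.1 ≠ 0)).card := by
  haveI := Fact.mk hq
  set S := Finset.univ.filter (fun i => ℓ i ≠ 0) with hSdef
  set T := Finset.univ.filter (fun j : Fin n => a j ≠ 0 ∧ ℓ j = 0) with hTdef
  set P := Finset.univ.filter (fun p : Fin n × Fin n =>
      p.1 < p.2 ∧ ℓ p.1 * a p.2 + ℓ p.2 * a p.1 ≠ 0) with hPdef
  -- membership facts
  have hST : ∀ p : Fin n × Fin n, p ∈ S ×ˢ T →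
      ℓ p.1 ≠ 0 ∧ a p.2 ≠ 0 ∧ ℓ p.2 = 0 := by
    intro p hp
    rw [Finset.mem_product] at hp
    simp only [hSdef, hTdef, Finset.mem_filter, Finset.mem_univ, true_and] at hp
    exact ⟨hp.1, hp.2.1, hp.2.2⟩
  have hcard : S.card * T.card ≤ P.card := by
    rw [← Finset.card_product]
    apply Finset.card_le_card_of_injOn
      (fun p => if p.1 < p.2 then p else (p.2, p.1))
    · intro p hp
      obtain ⟨h1, h2, h3⟩ := hST p hp
      have hne : ℓ p.1 * a p.2 + ℓ p.2 * a p.1 ≠ 0 := by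
        rw [h3, zero_mul, add_zero]
        exact mul_ne_zero h1 h2
      have hij : p.1 ≠ p.2 := fun h => h1 (h ▸ h3)
      by_cases h : p.1 < p.2
      · simp only [Finset.mem_coe, if_pos h, hPdef, Finset.mem_filter, Finset.mem_univ, true_and]
        exact ⟨h, hne⟩
      · have h' : p.2 < p.1 := lt_of_le_of_ne (not_lt.mp h) hij.symm
        simp only [Finset.mem_coe, if_neg h, hPdef, Finset.mem_filter, Finset.mem_univ, true_and]
        refine ⟨h', ?_⟩
        rwa [add_comm] at hne
    · intro p hp p' hp' heq
      obtain ⟨h1, h2, h3⟩ := hST p hp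
      obtain ⟨h1', h2', h3'⟩ := hST p' hp'
      simp only at heq
      by_cases h : p.1 < p.2 <;> by_cases h' : p'.1 < p'.2 <;>
        simp only [h, h', if_true, if_false] at heq
      · exact heq
      · exfalso
        have : ℓ p.1 = ℓ p'.2 := by rw [show p.1 = p'.2 from congrArg Prod.fst heq]
        exact h1 (this.trans h3')
      · exfalso
        have : ℓ p'.1 = ℓ p.2 := by
          rw [show p'.1 = p.2 from (congrArg Prod.fst heq).symm]
        exact h1' (this.trans h3)
      · exact Prod.ext (congrArg Prod.snd heq) (congrArg Prod.fst heq)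
  -- real arithmetic
  have hlog : (1 : ℝ) < Real.log n := by
    have : Real.exp 1 < (n : ℝ) := by
      have : (n : ℝ) ≥ 3 := by exact_mod_cast hn
      linarith [Real.exp_one_lt_d9]
    calc (1 : ℝ) = Real.log (Real.exp 1) := (Real.log_exp 1).symm
      _ < Real.log n := Real.log_lt_log (Real.exp_pos 1) this
  have hL : (0 : ℝ) < (Real.log n) ^ 2 := by positivity
  set L := (Real.log n) ^ 2 with hLdef
  -- number of zeros of a
  have ha0 : ((Finset.univ.filter (fun i => a i = 0)).card : ℝ) < n - n / L := by
    by_contra hcon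
    exact ha ⟨0, not_lt.mp hcon⟩
  -- T contains univ minus zeros of a minus S
  have hTcard : (n : ℝ) / (2 * L) ≤ (T.card : ℝ) := by
    have hsub : Finset.univ \ ((Finset.univ.filter (fun i => a i = 0)) ∪ S) ⊆ T := by
      intro j hj
      simp only [Finset.mem_sdiff, Finset.mem_union, Finset.mem_filter, Finset.mem_univ,
        true_and, hSdef, hTdef, not_or, not_not] at hj ⊢
      exact hj
    have hc1 := Finset.card_le_card hsub
    have hc2 : n - ((Finset.univ.filter (fun i => a i = 0)).card + S.card)
        ≤ (Finset.univ \ ((Finset.univ.filter (fun i => a i = 0)) ∪ S)).card := by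
      rw [Finset.card_sdiff_of_subset (Finset.subset_univ _), Finset.card_univ, Fintype.card_fin]
      exact Nat.sub_le_sub_left (Finset.card_union_le _ _) n
    have hc3 : (n : ℝ) - ((Finset.univ.filter (fun i => a i = 0)).card + S.card)
        ≤ (T.card : ℝ) := by
      have := le_trans hc2 hc1
      have h4 : ((n - ((Finset.univ.filter (fun i => a i = 0)).card + S.card) : ℕ) : ℝ)
          ≤ (T.card : ℝ) := by exact_mod_cast this
      calc (n : ℝ) - ((Finset.univ.filter (fun i => a i = 0)).card + S.card)
          ≤ ((n - ((Finset.univ.filter (fun i => a i = 0)).card + S.card) : ℕ) : ℝ) := by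
            cases le_total ((Finset.univ.filter (fun i => a i = 0)).card + S.card) n with
            | inl h => rw [Nat.cast_sub h]; push_cast; linarith
            | inr h =>
              rw [Nat.sub_eq_zero_of_le h]
              push_cast
              have : (n : ℝ) ≤ ((Finset.univ.filter (fun i => a i = 0)).card + S.card : ℕ) := by
                exact_mod_cast h
              push_cast at this
              simp
              linarith
        _ ≤ (T.card : ℝ) := h4
    have hScard : (S.card : ℝ) < n / (2 * L) := hs
    have : (n : ℝ) / L - n / (2 * L) ≤ (T.card : ℝ) := by
      push_cast at hc3
      linarith
    have heq : (n : ℝ) / L - n / (2 * L) = n / (2 * L) := by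
      field_simp
      ring
    linarith [heq ▸ this]
  -- finish
  have hPc : ((S.card * T.card : ℕ) : ℝ) ≤ (P.card : ℝ) := by exact_mod_cast hcard
  push_cast at hPc
  have hSnn : (0 : ℝ) ≤ (S.card : ℝ) := Nat.cast_nonneg _
  calc ((S.card : ℝ) * n) / (2 * L) = (S.card : ℝ) * (n / (2 * L)) := by ring
    _ ≤ (S.card : ℝ) * T.card := mul_le_mul_of_nonneg_left hTcard hSnn
    _ ≤ (P.card : ℝ) := hPc
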